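/- Let f : 𝕆 → 𝕆 be left para-linear with second associator [p,x,f] := f(px) − p f(x). Then Re(f([p,q,x])) = Re([p,x,f]·q) for all p, q, x ∈ 𝕆, where [p,q,x] = (pq)x − p(qx). In particular Re([p,x,f]·q) = −Re([q,x,f]·p). -/

import Mathlib

noncomputable section

open Quaternion

/-- The octonions, as the Cayley–Dickson double of the quaternions. -/
def Octo : Type := ℍ × ℍ

namespace Octo

instance : AddCommGroup Octo := inferInstanceAs (AddCommGroup (ℍ × ℍ))
instance : Module ℝ Octo := inferInstanceAs (Module ℝ (ℍ × ℍ))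

/-- Cayley–Dickson multiplication: (a,b)(c,d) = (ac − d̄b, da + bc̄). -/
instance : Mul Octo :=
  ⟨fun x y => ((x.1 * y.1 - star y.2 * x.2, y.2 * x.1 + x.2 * star y.1) : ℍ × ℍ)⟩

/-- Octonionic conjugation. -/
def conj (x : Octo) : Octo := ((star x.1, -x.2) : ℍ × ℍ)

/-- Real part. -/
def re (x : Octo) : ℝ := x.1.re

/-- Squared norm. -/
def normSq (x : Octo) : ℝ := re (x * conj x)

/-- The standard basis e₀ = 1, e₁, …, e₇. -/
def e : Fin 8 → Octo :=
  ![((1, 0) : ℍ × ℍ), ((⟨0,1,0,0⟩, 0) : ℍ × ℍ), ((⟨0,0,1,0⟩, 0) : ℍ × ℍ),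
    ((⟨0,0,0,1⟩, 0) : ℍ × ℍ), ((0, 1) : ℍ × ℍ), ((0, ⟨0,1,0,0⟩) : ℍ × ℍ),
    ((0, ⟨0,0,1,0⟩) : ℍ × ℍ), ((0, ⟨0,0,0,1⟩) : ℍ × ℍ)]

/-- Inverse: p⁻¹ = conj p / |p|². -/
def inv (x : Octo) : Octo := (normSq x)⁻¹ • conj x

/-- The associator [a,b,c] = (ab)c − a(bc). -/
def assoc (a b c : Octo) : Octo := a * b * c - a * (b * c)

/-- Left para-linear map: ℝ-linear with Re(f(px) − p f(x)) = 0. -/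
def IsParaLinear (f : Octo → Octo) : Prop :=
  IsLinearMap ℝ f ∧ ∀ p x : Octo, re (f (p * x) - p * f x) = 0

end Octo

namespace Octo

lemma mul_def' (a b : Octo) :
    a * b = ((a.1 * b.1 - star b.2 * a.2, b.2 * a.1 + a.2 * star b.1) : ℍ × ℍ) := rfl
lemma fst_add' (a b : Octo) : (a + b).1 = a.1 + b.1 := rfl
lemma snd_add' (a b : Octo) : (a + b).2 = a.2 + b.2 := rfl
lemma fst_sub' (a b : Octo) : (a - b).1 = a.1 - b.1 := rfl
lemma snd_sub' (a b : Octo) : (a - b).2 = a.2 - b.2 := rfl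
lemma fst_mul' (a b : Octo) : (a * b).1 = a.1 * b.1 - star b.2 * a.2 := rfl
lemma snd_mul' (a b : Octo) : (a * b).2 = b.2 * a.1 + a.2 * star b.1 := rfl

lemma re_add' (a b : Octo) : re (a + b) = re a + re b := by
  simp [re, fst_add']
lemma re_sub' (a b : Octo) : re (a - b) = re a - re b := by
  simp [re, fst_sub']
lemma re_neg' (a : Octo) : re (-a) = - re a := by
  have : (-a).1 = -a.1 := rfl
  simp [re, this]

lemma re_mul_comm (a b : Octo) : re (a * b) = re (b * a) := by
  show (a.1 * b.1 - star b.2 * a.2).re = (b.1 * a.1 - star a.2 * b.2).re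
  simp [Quaternion.re_mul]
  ring

lemma re_mul_assoc (a b c : Octo) : re (a * b * c) = re (a * (b * c)) := by
  obtain ⟨a1, a2⟩ := a; obtain ⟨b1, b2⟩ := b; obtain ⟨c1, c2⟩ := c
  show ((a1*b1 - star b2*a2)*c1 - star c2*(b2*a1 + a2*star b1)).re =
    (a1*(b1*c1 - star c2*b2) - star (c2*b1 + b2*star c1)*a2).re
  simp [Quaternion.re_mul, Quaternion.re_star]
  ring

lemma sub_mul' (a b c : Octo) : (a - b) * c = a * c - b * c := by
  refine Prod.ext ?_ ?_ <;>
    simp only [fst_mul', snd_mul', fst_sub', snd_sub'] <;>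
  · ext <;> simp <;> ring

set_option maxHeartbeats 1000000 in
lemma flex (p q x : Octo) : p*(q*x) + q*(p*x) = p*q*x + q*p*x := by
  refine Prod.ext ?_ ?_ <;>
    simp only [fst_mul', snd_mul', fst_add', snd_add'] <;>
  · ext <;> simp [Quaternion.re_mul, Quaternion.re_star, Quaternion.imI_star,
      Quaternion.imJ_star, Quaternion.imK_star] <;> ring

lemma assoc_antisymm (p q x : Octo) : assoc p q x = - assoc q p x := by
  have h := flex p q x
  unfold assoc
  have : p * q * x - p * (q * x) + (q * p * x - q * (p * x)) = 0 := by
    rw [show p * q * x - p * (q * x) + (q * p * x - q * (p * x))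
        = (p*q*x + q*p*x) - (p*(q*x) + q*(p*x)) by abel, ← h, sub_self]
  linear_combination (norm := abel) this

end Octo

theorem stmt14 (f : Octo → Octo) (hf : Octo.IsParaLinear f) (p q x : Octo) :
    Octo.re (f (Octo.assoc p q x)) = Octo.re ((f (p * x) - p * f x) * q) ∧
      Octo.re ((f (p * x) - p * f x) * q) = - Octo.re ((f (q * x) - q * f x) * p) := by
  obtain ⟨hlin, hpl⟩ := hf
  set g : Octo →ₗ[ℝ] Octo := IsLinearMap.mk' f hlin with hg
  have hgf : ∀ a : Octo, f a = g a := fun a => rfl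
  have hA : ∀ a b : Octo, Octo.re (f (a * b)) = Octo.re (a * f b) := by
    intro a b
    have := hpl a b
    rw [Octo.re_sub'] at this
    linarith
  have key : ∀ a b : Octo,
      Octo.re (f (Octo.assoc a b x)) = Octo.re ((f (a * x) - a * f x) * b) := by
    intro a b
    have lhs : Octo.re (f (Octo.assoc a b x))
        = Octo.re (a * b * f x) - Octo.re (f (a * (b * x))) := by
      rw [Octo.assoc, hgf, map_sub, ← hgf ((a*b)*x), ← hgf (a*(b*x)), Octo.re_sub',
        hA (a*b) x]
    have rhs : Octo.re ((f (a * x) - a * f x) * b)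
        = Octo.re (f (b * (a * x))) - Octo.re (b * a * f x) := by
      rw [Octo.sub_mul', Octo.re_sub', Octo.re_mul_comm (f (a*x)) b, ← hA b (a*x),
        Octo.re_mul_comm (a * f x) b, ← Octo.re_mul_assoc]
    have hsum : Octo.re (f (a * (b * x))) + Octo.re (f (b * (a * x)))
        = Octo.re (a * b * f x) + Octo.re (b * a * f x) := by
      rw [← Octo.re_add', hgf (a*(b*x)), hgf (b*(a*x)), ← map_add, Octo.flex a b x,
        map_add, ← hgf (a*b*x), ← hgf (b*a*x), Octo.re_add', hA (a*b) x, hA (b*a) x]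
    rw [lhs, rhs]
    linarith
  refine ⟨key p q, ?_⟩
  rw [← key p q, ← key q p, Octo.assoc_antisymm p q x, hgf, map_neg, ← hgf,
    Octo.re_neg']
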